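/- For every n ≥ 2, there exists a compact convex set K in the plane with nonempty interior such that any n extreme points of K can be connected by a polygonal path of total length strictly less than half the perimeter of K. -/

import Mathlib

open Set MeasureTheory

namespace Stmt8Aux

/-! ### Points in the plane -/

noncomputable def pt2 (a b : ℝ) : EuclideanSpace ℝ (Fin 2) := (WithLp.equiv 2 _).symm ![a, b]

@[simp] lemma pt2_apply0 (a b : ℝ) : pt2 a b 0 = a := rfl
@[simp] lemma pt2_apply1 (a b : ℝ) : pt2 a b 1 = b := rfl

lemma pt2_eta (q : EuclideanSpace ℝ (Fin 2)) : pt2 (q 0) (q 1) = q := by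
  refine PiLp.ext fun k => ?_
  fin_cases k <;> simp [pt2]

lemma dist_coords (a b : EuclideanSpace ℝ (Fin 2)) :
    dist a b = Real.sqrt ((a 0 - b 0)^2 + (a 1 - b 1)^2) := by
  rw [EuclideanSpace.dist_eq]
  simp [Fin.sum_univ_two, Real.dist_eq, sq_abs]

lemma apply_combo (u v : EuclideanSpace ℝ (Fin 2)) (s t : ℝ) (k : Fin 2) :
    (s • u + t • v) k = s * u k + t * v k := by
  simp [PiLp.add_apply, PiLp.smul_apply]

/-! ### The slopes and heights -/

noncomputable def tt (i : ℕ) : ℝ := 1 / Real.sqrt (i+1)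

noncomputable def ff (j : ℕ) : ℝ := ∑ i ∈ Finset.range j, tt i

noncomputable def vv (j : ℕ) : EuclideanSpace ℝ (Fin 2) := pt2 j (ff j)

@[simp] lemma vv_apply0 (j : ℕ) : vv j 0 = j := rfl
@[simp] lemma vv_apply1 (j : ℕ) : vv j 1 = ff j := rfl

lemma sqrt_cast_mul_self (i : ℕ) : Real.sqrt i * Real.sqrt i = (i:ℝ) :=
  Real.mul_self_sqrt (by positivity)

lemma tt_pos (i : ℕ) : 0 < tt i := by
  have : (0:ℝ) < Real.sqrt (i+1) := Real.sqrt_pos.2 (by positivity)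
  exact div_pos one_pos this

lemma tt_le_one (i : ℕ) : tt i ≤ 1 := by
  rw [tt, div_le_one (Real.sqrt_pos.2 (by positivity))]
  have h0 : ((1:ℝ)) ≤ (i:ℝ)+1 := by
    have : (0:ℝ) ≤ i := by positivity
    linarith
  have := Real.sqrt_le_sqrt h0
  simpa using this

lemma tt_anti {i j : ℕ} (h : i ≤ j) : tt j ≤ tt i := by
  apply one_div_le_one_div_of_le (Real.sqrt_pos.2 (by positivity))
  have : (i:ℝ) ≤ (j:ℝ) := by exact_mod_cast h
  exact Real.sqrt_le_sqrt (by linarith)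

lemma tt_strict_anti {i j : ℕ} (h : i < j) : tt j < tt i := by
  apply one_div_lt_one_div_of_lt (Real.sqrt_pos.2 (by positivity))
  apply Real.sqrt_lt_sqrt (by positivity)
  have : (i:ℝ) < j := by exact_mod_cast h
  linarith

lemma ff_succ (j : ℕ) : ff (j+1) = ff j + tt j := Finset.sum_range_succ _ _

lemma ff_mono {a b : ℕ} (h : a ≤ b) : ff a ≤ ff b := by
  induction b with
  | zero => simp_all [Nat.le_zero.1 h]
  | succ b ih =>
    rcases Nat.lt_or_ge a (b+1) with h' | h'
    · have := ih (Nat.lt_succ_iff.1 h')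
      rw [ff_succ]; linarith [tt_pos b]
    · have : a = b+1 := le_antisymm h h'
      simp [this]

lemma ff_nonneg (j : ℕ) : 0 ≤ ff j := by
  simpa [ff] using ff_mono (Nat.zero_le j)

lemma ff_diff_le {a b : ℕ} (h : a ≤ b) :
    ff b - ff a ≤ 2 * (Real.sqrt b - Real.sqrt a) := by
  induction b with
  | zero => simp_all [Nat.le_zero.1 h]
  | succ b ih =>
    rcases Nat.lt_or_ge a (b+1) with h' | h'
    · have hb := ih (Nat.lt_succ_iff.1 h')
      rw [ff_succ]
      have h1 : Real.sqrt b ≤ Real.sqrt (b+1) := Real.sqrt_le_sqrt (by push_cast; linarith)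
      have h2 : (0:ℝ) < Real.sqrt ((b:ℝ)+1) := Real.sqrt_pos.2 (by positivity)
      have h3 : Real.sqrt ((b:ℝ)+1) * Real.sqrt ((b:ℝ)+1) = (b:ℝ)+1 :=
        Real.mul_self_sqrt (by positivity)
      have h4 : Real.sqrt b * Real.sqrt b = (b : ℝ) := sqrt_cast_mul_self b
      have key : tt b ≤ 2 * (Real.sqrt ((b:ℝ)+1) - Real.sqrt b) := by
        rw [tt, div_le_iff₀ (by push_cast at h2 ⊢; exact h2)]
        push_cast
        nlinarith
      have hcast : Real.sqrt ((b:ℕ)+1 : ℕ) = Real.sqrt ((b:ℝ)+1) := by push_cast; rfl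
      rw [hcast]
      push_cast at hb ⊢
      linarith
    · have : a = b+1 := le_antisymm h h'
      simp [this]

lemma ff_le (j : ℕ) : ff j ≤ 2 * Real.sqrt j := by
  have := ff_diff_le (Nat.zero_le j)
  simpa [ff] using this

lemma dist_vv_le {a b : ℕ} (h : a ≤ b) : dist (vv a) (vv b) ≤ ((b:ℝ) - a) + 2 := by
  rcases Nat.eq_or_lt_of_le h with rfl | hlt
  · simp
  have hd : (1:ℝ) ≤ (b:ℝ) - a := by
    have : (a:ℝ) + 1 ≤ b := by exact_mod_cast hlt
    linarith
  have hy : ff b - ff a ≤ 2 * (Real.sqrt b - Real.sqrt a) := ff_diff_le h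
  have hy0 : 0 ≤ ff b - ff a := by linarith [ff_mono h]
  have hsq : (Real.sqrt b - Real.sqrt a)^2 ≤ (b:ℝ) - a := by
    have h4 := sqrt_cast_mul_self b
    have h5 := sqrt_cast_mul_self a
    have h6 : 0 ≤ Real.sqrt a := Real.sqrt_nonneg _
    have h7 : Real.sqrt a ≤ Real.sqrt b := by
      apply Real.sqrt_le_sqrt; exact_mod_cast h
    nlinarith
  have hyy : (ff b - ff a)^2 ≤ 4 * ((b:ℝ) - a) := by nlinarith
  rw [vv, vv, dist_coords]
  simp only [pt2_apply0, pt2_apply1]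
  have : ((a:ℝ)-b)^2 + (ff a - ff b)^2 ≤ (((b:ℝ) - a) + 2)^2 := by nlinarith
  calc Real.sqrt (((a:ℝ)-b)^2 + (ff a - ff b)^2) ≤ Real.sqrt ((((b:ℝ) - a) + 2)^2) :=
        Real.sqrt_le_sqrt this
    _ = ((b:ℝ) - a) + 2 := Real.sqrt_sq (by linarith)

lemma dist_vv_edge_eq (i : ℕ) :
    dist (vv i) (vv (i+1)) = Real.sqrt (1 + 1/((i:ℝ)+1)) := by
  rw [vv, vv, dist_coords]
  simp only [pt2_apply0, pt2_apply1]
  congr 1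
  have h1 : ((i:ℝ) - ((i:ℕ)+1:ℕ))^2 = 1 := by push_cast; ring
  have h2 : (ff i - ff (i+1))^2 = 1/((i:ℝ)+1) := by
    rw [ff_succ, tt]
    have h3 : Real.sqrt ((i:ℝ)+1) * Real.sqrt ((i:ℝ)+1) = (i:ℝ)+1 :=
      Real.mul_self_sqrt (by positivity)
    have h2' : (0:ℝ) < Real.sqrt ((i:ℝ)+1) := Real.sqrt_pos.2 (by positivity)
    have hcast : Real.sqrt ((i:ℕ)+1 : ℝ) = Real.sqrt ((i:ℝ)+1) := by norm_cast
    field_simp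
    rw [Real.sq_sqrt (by positivity)]; ring
  rw [h1, h2]

lemma dist_vv_edge (i : ℕ) : 1 + 1/(3*((i:ℝ)+1)) ≤ dist (vv i) (vv (i+1)) := by
  rw [dist_vv_edge_eq]
  set u : ℝ := 1/((i:ℝ)+1) with hu
  have hu0 : 0 < u := by positivity
  have hu1 : u ≤ 1 := by
    rw [hu, div_le_one (by positivity)]; push_cast; linarith
  have h13 : 1 + 1/(3*((i:ℝ)+1)) = 1 + u/3 := by rw [hu]; field_simp
  rw [h13]
  have : (1 + u/3)^2 ≤ 1 + u := by nlinarith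
  calc 1 + u/3 = Real.sqrt ((1+u/3)^2) := (Real.sqrt_sq (by linarith)).symm
    _ ≤ Real.sqrt (1+u) := Real.sqrt_le_sqrt this

lemma dist_vv_edge_le (i : ℕ) : dist (vv i) (vv (i+1)) ≤ 2 := by
  rw [dist_vv_edge_eq]
  have hu1 : 1/((i:ℝ)+1) ≤ 1 := by
    rw [div_le_one (by positivity)]; push_cast; linarith
  calc Real.sqrt (1 + 1/((i:ℝ)+1)) ≤ Real.sqrt 4 := Real.sqrt_le_sqrt (by linarith)
    _ = 2 := by
        rw [show (4:ℝ) = 2^2 by norm_num, Real.sqrt_sq (by norm_num)]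

lemma dist_vv_chord_lb (m : ℕ) : (m:ℝ) ≤ dist (vv 0) (vv m) := by
  rw [vv, vv, dist_coords]
  simp only [pt2_apply0, pt2_apply1]
  calc (m:ℝ) = Real.sqrt ((m:ℝ)^2) := (Real.sqrt_sq (by positivity)).symm
    _ ≤ _ := Real.sqrt_le_sqrt (by simp [ff]; nlinarith [ff_nonneg m, sq_nonneg (ff m)])

lemma dist_vv_chord_ub (m : ℕ) (hm : 4 ≤ m) : dist (vv 0) (vv m) ≤ 2*m := by
  rw [vv, vv, dist_coords]
  simp only [pt2_apply0, pt2_apply1]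
  have h1 : ff 0 = 0 := by simp [ff]
  have h2 : ff m ≤ 2 * Real.sqrt m := ff_le m
  have h3 : (Real.sqrt m)*(Real.sqrt m) = (m:ℝ) := sqrt_cast_mul_self m
  have h4 : Real.sqrt m ≤ (m:ℝ)/2 := by
    have : (4:ℝ) ≤ m := by exact_mod_cast hm
    nlinarith [Real.sqrt_nonneg (m:ℝ)]
  have h5 : ff m ≤ (m:ℝ) := by linarith
  have h6 : 0 ≤ ff m := ff_nonneg m
  calc Real.sqrt ((((0:ℕ):ℝ) - m)^2 + (ff 0 - ff m)^2) ≤ Real.sqrt ((2*(m:ℝ))^2) :=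
        Real.sqrt_le_sqrt (by rw [h1]; push_cast; nlinarith)
    _ = 2*(m:ℝ) := Real.sqrt_sq (by positivity)

lemma harmonic_lb (k : ℕ) :
    1 + (k:ℝ)/2 ≤ ∑ i ∈ Finset.range (2^k), 1/((i:ℝ)+1) := by
  induction k with
  | zero => norm_num
  | succ k ih =>
    have hsplit : ∑ i ∈ Finset.range (2^(k+1)), 1/((i:ℝ)+1)
        = (∑ i ∈ Finset.range (2^k), 1/((i:ℝ)+1))
          + ∑ i ∈ Finset.Ico ((2:ℕ)^k) ((2:ℕ)^(k+1)), 1/((i:ℝ)+1) := by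
      rw [Finset.range_eq_Ico, Finset.range_eq_Ico]
      exact (Finset.sum_Ico_consecutive (fun i : ℕ => 1/((i:ℝ)+1)) (Nat.zero_le _) (Nat.pow_le_pow_right (by norm_num : 2 > 0) (by omega : k ≤ k+1))).symm
    have hcard : (Finset.Ico ((2:ℕ)^k) ((2:ℕ)^(k+1))).card = 2^k := by
      rw [Nat.card_Ico, pow_succ]; omega
    have hterm : ∀ i ∈ Finset.Ico ((2:ℕ)^k) ((2:ℕ)^(k+1)), (1:ℝ)/(2^(k+1)) ≤ 1/((i:ℝ)+1) := by
      intro i hi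
      rw [Finset.mem_Ico] at hi
      apply one_div_le_one_div_of_le (by positivity)
      have h9 : i + 1 ≤ 2^(k+1) := hi.2
      have : (i:ℝ) + 1 ≤ ((2:ℕ)^(k+1) : ℝ) := by exact_mod_cast h9
      simpa using this
    have hsum2 : (2^k : ℝ) * (1/(2^(k+1))) ≤ ∑ i ∈ Finset.Ico ((2:ℕ)^k) ((2:ℕ)^(k+1)), 1/((i:ℝ)+1) := by
      calc (2^k : ℝ) * (1/(2^(k+1)))
          = ∑ _i ∈ Finset.Ico ((2:ℕ)^k) ((2:ℕ)^(k+1)), (1:ℝ)/(2^(k+1)) := by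
            rw [Finset.sum_const, hcard]; push_cast; ring
        _ ≤ _ := Finset.sum_le_sum hterm
    have : (2^k : ℝ) * (1/(2^(k+1))) = 1/2 := by
      rw [pow_succ]; field_simp
    rw [hsplit]; push_cast at this ⊢; linarith

lemma ff_sub_eq (a b : ℕ) (h : a ≤ b) : ff b - ff a = ∑ l ∈ Finset.Ico a b, tt l := by
  rw [ff, ff, Finset.range_eq_Ico, Finset.range_eq_Ico,
    ← Finset.sum_Ico_consecutive _ (Nat.zero_le a) h]
  ring

lemma ff_sub_le (a b : ℕ) (h : a ≤ b) : ff b - ff a ≤ ((b:ℝ)-a) * tt a := by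
  rw [ff_sub_eq a b h]
  calc ∑ l ∈ Finset.Ico a b, tt l ≤ ∑ _l ∈ Finset.Ico a b, tt a :=
        Finset.sum_le_sum fun l hl => tt_anti (Finset.mem_Ico.1 hl).1
    _ = ((b:ℝ)-a) * tt a := by
        rw [Finset.sum_const, Nat.card_Ico]
        rw [nsmul_eq_mul]
        congr 1
        have : (a:ℝ) ≤ b := by exact_mod_cast h
        push_cast [Nat.cast_sub h]
        ring

lemma le_ff_sub (a b : ℕ) (h : a ≤ b) : ((b:ℝ)-a) * tt b ≤ ff b - ff a := by
  rw [ff_sub_eq a b h]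
  calc ((b:ℝ)-a) * tt b = ∑ _l ∈ Finset.Ico a b, tt b := by
        rw [Finset.sum_const, Nat.card_Ico, nsmul_eq_mul]
        congr 1
        push_cast [Nat.cast_sub h]
        ring
    _ ≤ _ := Finset.sum_le_sum fun l hl => tt_anti (le_of_lt (Finset.mem_Ico.1 hl).2)

lemma lt_ff_sub (a b : ℕ) (h : a < b) : ((b:ℝ)-a) * tt b < ff b - ff a := by
  rw [ff_sub_eq a b (le_of_lt h)]
  calc ((b:ℝ)-a) * tt b = ∑ _l ∈ Finset.Ico a b, tt b := by
        rw [Finset.sum_const, Nat.card_Ico, nsmul_eq_mul]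
        congr 1
        push_cast [Nat.cast_sub (le_of_lt h)]
        ring
    _ < _ := by
        apply Finset.sum_lt_sum_of_nonempty
        · rw [Finset.nonempty_Ico]; exact h
        · exact fun l hl => tt_strict_anti (Finset.mem_Ico.1 hl).2

/-- Chebyshev-type: the polygon lies (weakly) above the chord. -/
lemma chord_below (j m : ℕ) (h : j ≤ m) : (j:ℝ) * ff m ≤ (m:ℝ) * ff j := by
  rcases Nat.eq_zero_or_pos j with rfl | hj
  · simp [ff, Finset.sum_nonneg fun l _ => le_of_lt (tt_pos l)]
  rcases Nat.eq_or_lt_of_le h with rfl | hjm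
  · ring_nf; exact le_refl _
  have h1 : (j:ℝ) * tt j < ff j := by
    have := lt_ff_sub 0 j hj
    simpa [ff] using this
  have h2 : ff m - ff j ≤ ((m:ℝ)-j) * tt j := ff_sub_le j m h
  have hj' : (0:ℝ) < j := by exact_mod_cast hj
  have hjm' : (j:ℝ) < m := by exact_mod_cast hjm
  nlinarith

/-- strict version for interior vertices -/
lemma chord_strictly_below (j m : ℕ) (h0 : 0 < j) (h : j < m) :
    (j:ℝ) * ff m < (m:ℝ) * ff j := by
  have h1 : (j:ℝ) * tt j < ff j := by
    have := lt_ff_sub 0 j h0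
    simpa [ff] using this
  have h2 : ff m - ff j ≤ ((m:ℝ)-j) * tt j := ff_sub_le j m (le_of_lt h)
  have hj' : (0:ℝ) < j := by exact_mod_cast h0
  have hjm' : (j:ℝ) < m := by exact_mod_cast h
  nlinarith

/-! ### Geometry -/

noncomputable def cpt (u v : EuclideanSpace ℝ (Fin 2)) (t : ℝ) : EuclideanSpace ℝ (Fin 2) :=
  (1-t) • u + t • v

lemma cpt_apply (u v : EuclideanSpace ℝ (Fin 2)) (t : ℝ) (k : Fin 2) :
    cpt u v t k = (1-t) * u k + t * v k := apply_combo u v (1-t) t k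

lemma combo_cpt (u v : EuclideanSpace ℝ (Fin 2)) (a b s : ℝ) :
    (1-s) • cpt u v a + s • cpt u v b = cpt u v ((1-s)*a + s*b) := by
  simp only [cpt, smul_add, smul_smul]
  module

lemma dist_cpt (u v : EuclideanSpace ℝ (Fin 2)) (a b : ℝ) :
    dist (cpt u v a) (cpt u v b) = |a - b| * dist u v := by
  rw [dist_coords (cpt u v a) (cpt u v b), dist_coords u v]
  simp only [cpt_apply]
  have h : ((1-a) * u 0 + a * v 0 - ((1-b) * u 0 + b * v 0))^2
      + ((1-a) * u 1 + a * v 1 - ((1-b) * u 1 + b * v 1))^2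
      = (a-b)^2 * ((u 0 - v 0)^2 + (u 1 - v 1)^2) := by ring
  rw [h, Real.sqrt_mul (sq_nonneg _), Real.sqrt_sq_eq_abs]

lemma cpt_mem_segment (u v : EuclideanSpace ℝ (Fin 2)) {t : ℝ} (h0 : 0 ≤ t) (h1 : t ≤ 1) :
    cpt u v t ∈ segment ℝ u v :=
  ⟨1-t, t, by linarith, h0, by ring, rfl⟩

lemma seg_param {u v q : EuclideanSpace ℝ (Fin 2)} {a b : ℝ}
    (h : q ∈ segment ℝ (cpt u v a) (cpt u v b)) :
    ∃ s, 0 ≤ s ∧ s ≤ 1 ∧ q = cpt u v ((1-s)*a + s*b) := by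
  obtain ⟨x, y, hx, hy, hxy, rfl⟩ := h
  refine ⟨y, hy, by linarith, ?_⟩
  rw [show x = 1 - y by linarith, combo_cpt]

noncomputable def del (m : ℕ) : ℝ := 1/(16*(m:ℝ))

lemma del_pos {m : ℕ} (hm : 0 < m) : 0 < del m := by
  have : (0:ℝ) < m := by exact_mod_cast hm
  rw [del]; positivity

lemma del_le {m : ℕ} (hm : 0 < m) : del m ≤ 1/16 := by
  have h1 : (1:ℝ) ≤ m := by exact_mod_cast hm
  rw [del]
  rw [div_le_div_iff₀ (by linarith) (by norm_num)]
  linarith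

noncomputable def piece (m i : ℕ) : Set (EuclideanSpace ℝ (Fin 2)) :=
  if i < m then
    segment ℝ (cpt (vv i) (vv (i+1)) (del m)) (cpt (vv i) (vv (i+1)) (1 - del m))
  else
    segment ℝ (cpt (vv 0) (vv m) (del m)) (cpt (vv 0) (vv m) (1 - del m))

noncomputable def KK (m : ℕ) : Set (EuclideanSpace ℝ (Fin 2)) :=
  convexHull ℝ (vv '' Set.Iic m)

lemma vv_mem_KK {j m : ℕ} (h : j ≤ m) : vv j ∈ KK m :=
  subset_convexHull _ _ ⟨j, h, rfl⟩

lemma isCompact_KK (m : ℕ) : IsCompact (KK m) :=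
  ((Set.finite_Iic m).image vv).isCompact_convexHull ℝ

lemma convex_KK (m : ℕ) : Convex ℝ (KK m) := convex_convexHull _ _

lemma piece_subset_KK {m : ℕ} (i : ℕ) (hm : 0 < m) (him : i ≤ m) :
    piece m i ⊆ KK m := by
  have hd0 : (0:ℝ) ≤ del m := (del_pos hm).le
  have hd1 : del m ≤ 1 := le_trans (del_le hm) (by norm_num)
  by_cases h : i < m
  · rw [piece, if_pos h]
    apply (convex_KK m).segment_subset
    · exact (convex_KK m).segment_subset (vv_mem_KK (le_of_lt h)) (vv_mem_KK h)
        (cpt_mem_segment _ _ hd0 hd1)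
    · exact (convex_KK m).segment_subset (vv_mem_KK (le_of_lt h)) (vv_mem_KK h)
        (cpt_mem_segment _ _ (by linarith) (by linarith))
  · rw [piece, if_neg h]
    apply (convex_KK m).segment_subset
    · exact (convex_KK m).segment_subset (vv_mem_KK (Nat.zero_le m)) (vv_mem_KK le_rfl)
        (cpt_mem_segment _ _ hd0 hd1)
    · exact (convex_KK m).segment_subset (vv_mem_KK (Nat.zero_le m)) (vv_mem_KK le_rfl)
        (cpt_mem_segment _ _ (by linarith) (by linarith))

lemma piece_param_edge {m i : ℕ} {q : EuclideanSpace ℝ (Fin 2)} (him : i < m) (hm : 0 < m)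
    (hq : q ∈ piece m i) :
    ∃ r, del m ≤ r ∧ r ≤ 1 - del m ∧ q = cpt (vv i) (vv (i+1)) r := by
  rw [piece, if_pos him] at hq
  obtain ⟨s, hs0, hs1, rfl⟩ := seg_param hq
  have hd := del_le hm
  refine ⟨(1-s)*(del m) + s*(1 - del m), by nlinarith, by nlinarith, rfl⟩

lemma piece_param_chord {m : ℕ} {q : EuclideanSpace ℝ (Fin 2)} (hm : 0 < m)
    (hq : q ∈ piece m m) :
    ∃ r, del m ≤ r ∧ r ≤ 1 - del m ∧ q = cpt (vv 0) (vv m) r := by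
  rw [piece, if_neg (lt_irrefl m)] at hq
  obtain ⟨s, hs0, hs1, rfl⟩ := seg_param hq
  have hd := del_le hm
  refine ⟨(1-s)*(del m) + s*(1 - del m), by nlinarith, by nlinarith, rfl⟩

lemma KK_halfspace {m : ℕ} (c₁ c₂ b : ℝ)
    (hv : ∀ j, j ≤ m → c₁ * (j:ℝ) + c₂ * ff j ≤ b) :
    ∀ q ∈ KK m, c₁ * q 0 + c₂ * q 1 ≤ b := by
  intro q hq
  have hcvx : Convex ℝ {q : EuclideanSpace ℝ (Fin 2) | c₁ * q 0 + c₂ * q 1 ≤ b} := by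
    apply convex_halfSpace_le
    constructor
    · intro x y; simp [PiLp.add_apply]; ring
    · intro c x; simp [PiLp.smul_apply]; ring
  have hsub : vv '' Set.Iic m ⊆ {q : EuclideanSpace ℝ (Fin 2) | c₁ * q 0 + c₂ * q 1 ≤ b} := by
    rintro _ ⟨j, hj, rfl⟩
    simpa using hv j hj
  exact convexHull_min hsub hcvx hq

lemma norm_pt2_vert (c : ℝ) : ‖pt2 0 c‖ = |c| := by
  rw [EuclideanSpace.norm_eq]
  simp [Fin.sum_univ_two, Real.sqrt_sq_eq_abs]

lemma not_mem_interior_of_support {K : Set (EuclideanSpace ℝ (Fin 2))} (c₁ c₂ b : ℝ)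
    (w : EuclideanSpace ℝ (Fin 2)) (hwn : ‖w‖ = 1)
    (hK : ∀ q ∈ K, c₁ * q 0 + c₂ * q 1 ≤ b) {q : EuclideanSpace ℝ (Fin 2)}
    (hq : c₁ * q 0 + c₂ * q 1 = b) (hww : 0 < c₁ * w 0 + c₂ * w 1) :
    q ∉ interior K := by
  intro h
  rcases Metric.mem_nhds_iff.1 (mem_interior_iff_mem_nhds.1 h) with ⟨ε, hε, hball⟩
  have hq' : q + (ε/2) • w ∈ Metric.ball q ε := by
    rw [Metric.mem_ball, dist_eq_norm, add_sub_cancel_left, norm_smul, hwn]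
    simp only [mul_one, Real.norm_eq_abs]
    rw [abs_of_pos (by linarith)]
    linarith
  have hle := hK _ (hball hq')
  have h0 : (q + (ε/2) • w) 0 = q 0 + (ε/2) * w 0 := by
    simp [PiLp.add_apply, PiLp.smul_apply]
  have h1 : (q + (ε/2) • w) 1 = q 1 + (ε/2) * w 1 := by
    simp [PiLp.add_apply, PiLp.smul_apply]
  rw [h0, h1] at hle
  nlinarith

lemma ff_zero : ff 0 = 0 := by simp [ff]

lemma piece_subset_frontier {m : ℕ} (hm : 4 ≤ m) (i : ℕ) (him : i ≤ m) :
    piece m i ⊆ frontier (KK m) := by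
  have hm0 : 0 < m := by omega
  have hclosed : IsClosed (KK m) := (isCompact_KK m).isClosed
  rw [hclosed.frontier_eq]
  intro q hq
  refine ⟨piece_subset_KK i hm0 him hq, ?_⟩
  by_cases h : i < m
  · -- edge supporting line
    obtain ⟨r, hr0, hr1, rfl⟩ := piece_param_edge h hm0 hq
    apply not_mem_interior_of_support (-(tt i)) 1 (ff i - tt i * i) (pt2 0 1)
      (by simpa using norm_pt2_vert 1)
    · apply KK_halfspace
      intro j hj
      rcases le_or_gt i j with hij | hij
      · have := ff_sub_le i j hij
        linarith
      · have := le_ff_sub j i (le_of_lt hij)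
        linarith
    · have e0 : cpt (vv i) (vv (i+1)) r 0 = (1-r) * i + r * ((i:ℝ)+1) := by
        rw [cpt_apply]; simp only [vv_apply0]; push_cast; ring
      have e1 : cpt (vv i) (vv (i+1)) r 1 = (1-r) * ff i + r * ff (i+1) := by
        rw [cpt_apply]; simp only [vv_apply1]
      rw [e0, e1, ff_succ]
      ring
    · simp
  · -- chord supporting line
    have him' : i = m := by omega
    rw [him'] at hq
    obtain ⟨r, hr0, hr1, rfl⟩ := piece_param_chord hm0 hq
    apply not_mem_interior_of_support (ff m) (-(m:ℝ)) 0 (pt2 0 (-1))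
      (by simpa using norm_pt2_vert (-1))
    · apply KK_halfspace
      intro j hj
      have := chord_below j m hj
      nlinarith [this]
    · have e0 : cpt (vv 0) (vv m) r 0 = r * m := by
        rw [cpt_apply]; simp only [vv_apply0]; push_cast; ring
      have e1 : cpt (vv 0) (vv m) r 1 = r * ff m := by
        rw [cpt_apply]; simp only [vv_apply1, ff_zero]; ring
      rw [e0, e1]
      ring
    · have : (0:ℝ) < m := by exact_mod_cast hm0
      simp only [pt2_apply0, pt2_apply1]
      linarith

lemma piece_x_edge {m i : ℕ} {q : EuclideanSpace ℝ (Fin 2)} (him : i < m) (hm : 0 < m)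
    (hq : q ∈ piece m i) : (i:ℝ) + del m ≤ q 0 ∧ q 0 ≤ (i:ℝ) + 1 - del m := by
  obtain ⟨r, hr0, hr1, rfl⟩ := piece_param_edge him hm hq
  have e0 : cpt (vv i) (vv (i+1)) r 0 = (i:ℝ) + r := by
    rw [cpt_apply]; simp only [vv_apply0]; push_cast; ring
  rw [e0]
  constructor <;> linarith

/-- value of the chord functional `ff m * x - m * y` on the pieces -/
lemma chordfun_piece_edge {m i : ℕ} {q : EuclideanSpace ℝ (Fin 2)} (hm : 4 ≤ m) (him : i < m)
    (hq : q ∈ piece m i) : ff m * q 0 - m * q 1 < 0 := by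
  have hm0 : 0 < m := by omega
  obtain ⟨r, hr0, hr1, rfl⟩ := piece_param_edge him hm0 hq
  have hd := del_pos hm0
  have e0 : cpt (vv i) (vv (i+1)) r 0 = (1-r) * i + r * ((i:ℝ)+1) := by
    rw [cpt_apply]; simp only [vv_apply0]; push_cast; ring
  have e1 : cpt (vv i) (vv (i+1)) r 1 = (1-r) * ff i + r * ff (i+1) := by
    rw [cpt_apply]; simp only [vv_apply1]
  rw [e0, e1]
  have hL : ff m * ((1-r) * i + r * ((i:ℝ)+1)) - (m:ℝ) * ((1-r) * ff i + r * ff (i+1))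
      = (1-r) * ((i:ℝ) * ff m - m * ff i) + r * (((i:ℝ)+1) * ff m - m * ff (i+1)) := by ring
  rw [hL]
  have hi1 : ((i:ℝ)+1) = ((i+1 : ℕ) : ℝ) := by push_cast; ring
  rcases Nat.eq_zero_or_pos i with rfl | hi0
  · have h1 : ((0:ℕ):ℝ) * ff m - m * ff 0 = 0 := by simp [ff_zero]
    have h2 : ((1:ℕ):ℝ) * ff m < (m:ℝ) * ff 1 := chord_strictly_below 1 m (by norm_num) (by omega)
    push_cast at h1 h2 ⊢
    nlinarith
  · have h1 : (i:ℝ) * ff m < (m:ℝ) * ff i := chord_strictly_below i m hi0 him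
    have h2 : ((i+1:ℕ):ℝ) * ff m ≤ (m:ℝ) * ff (i+1) := chord_below (i+1) m (by omega)
    push_cast at h1 h2 ⊢
    nlinarith

lemma chordfun_piece_chord {m : ℕ} {q : EuclideanSpace ℝ (Fin 2)} (hm : 0 < m)
    (hq : q ∈ piece m m) : ff m * q 0 - m * q 1 = 0 := by
  obtain ⟨r, hr0, hr1, rfl⟩ := piece_param_chord hm hq
  have e0 : cpt (vv 0) (vv m) r 0 = r * m := by
    rw [cpt_apply]; simp only [vv_apply0]; push_cast; ring
  have e1 : cpt (vv 0) (vv m) r 1 = r * ff m := by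
    rw [cpt_apply]; simp only [vv_apply1, ff_zero]; ring
  rw [e0, e1]; ring

lemma piece_disjoint {m : ℕ} (hm : 4 ≤ m) :
    (↑(Finset.range (m+1)) : Set ℕ).PairwiseDisjoint (piece m) := by
  have hm0 : 0 < m := by omega
  have key : ∀ i j, i < j → j ≤ m → Disjoint (piece m i) (piece m j) := by
    intro i j hij hjm
    rw [Set.disjoint_left]
    intro q hqi hqj
    rcases Nat.lt_or_ge j m with hjm' | hjm'
    · -- both edges
      have h1 := piece_x_edge (lt_trans hij hjm') hm0 hqi
      have h2 := piece_x_edge hjm' hm0 hqj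
      have hd := del_pos hm0
      have : (i:ℝ) + 1 ≤ (j:ℝ) := by exact_mod_cast hij
      linarith [h1.2, h2.1]
    · -- j = m : chord vs edge
      have hj : j = m := by omega
      subst hj
      have h1 := chordfun_piece_edge hm hij hqi
      have h2 := chordfun_piece_chord hm0 hqj
      linarith
  intro i hi j hj hij
  rcases Nat.lt_or_ge i j with h | h
  · simp only [Finset.coe_range, Set.mem_Iio] at hj
    exact key i j h (by omega)
  · have h' : j < i := by omega
    simp only [Finset.coe_range, Set.mem_Iio] at hi
    exact (key j i h' (by omega)).symm

lemma piece_measurable (m i : ℕ) : MeasurableSet (piece m i) := by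
  have : ∀ a b : EuclideanSpace ℝ (Fin 2), MeasurableSet (segment ℝ a b) := by
    intro a b
    rw [segment_eq_image]
    exact (isCompact_Icc.image (by fun_prop)).isClosed.measurableSet
  by_cases h : i < m <;> simp [piece, h] <;> apply this

lemma piece_length_edge {m i : ℕ} (him : i < m) (hm : 0 < m) :
    μH[1] (piece m i) = ENNReal.ofReal ((1 - 2*del m) * dist (vv i) (vv (i+1))) := by
  rw [piece, if_pos him, hausdorffMeasure_segment, edist_dist, dist_cpt]
  congr 1
  have hd := del_le hm
  rw [abs_of_nonpos (by linarith)]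
  ring_nf

lemma piece_length_chord {m : ℕ} (hm : 0 < m) :
    μH[1] (piece m m) = ENNReal.ofReal ((1 - 2*del m) * dist (vv 0) (vv m)) := by
  rw [piece, if_neg (lt_irrefl m), hausdorffMeasure_segment, edist_dist, dist_cpt]
  congr 1
  have hd := del_le hm
  rw [abs_of_nonpos (by linarith)]
  ring_nf



lemma sum_pieces_lb (Kn : ℕ) (hK : 2 ≤ Kn) :
    2*((2^Kn : ℕ):ℝ) + (Kn:ℝ)/6 - 1/6
      ≤ ∑ i ∈ Finset.range (2^Kn + 1),
          (if i < 2^Kn then (1 - 2*del (2^Kn)) * dist (vv i) (vv (i+1))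
           else (1 - 2*del (2^Kn)) * dist (vv 0) (vv (2^Kn))) := by
  set m := 2^Kn with hm
  have hm4 : 4 ≤ m := by
    calc 4 = 2^2 := by norm_num
    _ ≤ 2^Kn := Nat.pow_le_pow_right (by norm_num) hK
  have hm0 : 0 < m := by omega
  have hmR : (4:ℝ) ≤ m := by exact_mod_cast hm4
  have hdel : (m:ℝ) * del m = 1/16 := by
    rw [del]; field_simp
  have hd0 : 0 < del m := del_pos hm0
  have hd16 : del m ≤ 1/16 := del_le hm0
  rw [Finset.sum_range_succ, if_neg (lt_irrefl m)]
  have hedge : ∀ i ∈ Finset.range m,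
      (1 + 1/(3*((i:ℝ)+1)) - 4*del m)
        ≤ (if i < m then (1 - 2*del m) * dist (vv i) (vv (i+1))
           else (1 - 2*del m) * dist (vv 0) (vv m)) := by
    intro i hi
    rw [if_pos (Finset.mem_range.1 hi)]
    have h1 := dist_vv_edge i
    have h2 := dist_vv_edge_le i
    nlinarith [dist_nonneg (x := vv i) (y := vv (i+1))]
  have hsum1 : ∑ i ∈ Finset.range m, (1 + 1/(3*((i:ℝ)+1)) - 4*del m)
      = (m:ℝ) + (1/3) * (∑ i ∈ Finset.range m, 1/((i:ℝ)+1)) - 4*(m:ℝ)*del m := by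
    calc ∑ i ∈ Finset.range m, (1 + 1/(3*((i:ℝ)+1)) - 4*del m)
        = ∑ i ∈ Finset.range m, ((1 - 4*del m) + (1/3)*(1/((i:ℝ)+1))) :=
          Finset.sum_congr rfl (fun i _ => by
            have h : (0:ℝ) < (i:ℝ)+1 := by positivity
            field_simp
            ring)
      _ = (m:ℝ)*(1 - 4*del m) + (1/3) * (∑ i ∈ Finset.range m, 1/((i:ℝ)+1)) := by
          rw [Finset.sum_add_distrib, Finset.sum_const, Finset.card_range, ← Finset.mul_sum,
            nsmul_eq_mul]
      _ = (m:ℝ) + (1/3) * (∑ i ∈ Finset.range m, 1/((i:ℝ)+1)) - 4*(m:ℝ)*del m := by ring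
  have hharm : 1 + (Kn:ℝ)/2 ≤ ∑ i ∈ Finset.range m, 1/((i:ℝ)+1) := harmonic_lb Kn
  have hchord1 := dist_vv_chord_lb m
  have hchord2 := dist_vv_chord_ub m hm4
  have hchordpiece : (m:ℝ) - 1/4 ≤ (1 - 2*del m) * dist (vv 0) (vv m) := by nlinarith
  have hsum2 : ∑ i ∈ Finset.range m, (1 + 1/(3*((i:ℝ)+1)) - 4*del m)
      ≤ ∑ i ∈ Finset.range m,
          (if i < m then (1 - 2*del m) * dist (vv i) (vv (i+1))
           else (1 - 2*del m) * dist (vv 0) (vv m)) := Finset.sum_le_sum hedge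
  rw [hsum1] at hsum2
  nlinarith

lemma frontier_lb (Kn : ℕ) (hK : 2 ≤ Kn) :
    ENNReal.ofReal (2*((2^Kn : ℕ):ℝ) + (Kn:ℝ)/6 - 1/6) ≤ μH[1] (frontier (KK (2^Kn))) := by
  set m := 2^Kn with hm
  have hm4 : 4 ≤ m := by
    calc 4 = 2^2 := by norm_num
    _ ≤ 2^Kn := Nat.pow_le_pow_right (by norm_num) hK
  have hm0 : 0 < m := by omega
  have hsub : (⋃ i ∈ Finset.range (m+1), piece m i) ⊆ frontier (KK m) := by
    apply Set.iUnion₂_subset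
    intro i hi
    exact piece_subset_frontier hm4 i (Nat.lt_succ_iff.1 (Finset.mem_range.1 hi))
  have hmeas : μH[1] (⋃ i ∈ Finset.range (m+1), piece m i)
      = ∑ i ∈ Finset.range (m+1), μH[1] (piece m i) :=
    measure_biUnion_finset (piece_disjoint hm4) (fun i _ => piece_measurable m i)
  have hlen : ∀ i ∈ Finset.range (m+1), μH[1] (piece m i)
      = ENNReal.ofReal (if i < m then (1 - 2*del m) * dist (vv i) (vv (i+1))
           else (1 - 2*del m) * dist (vv 0) (vv m)) := by
    intro i hi
    by_cases h : i < m
    · rw [if_pos h]; exact piece_length_edge h hm0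
    · have : i = m := by
        have := Finset.mem_range.1 hi; omega
      rw [if_neg h, this]; exact piece_length_chord hm0
  have hnonneg : ∀ i ∈ Finset.range (m+1),
      0 ≤ (if i < m then (1 - 2*del m) * dist (vv i) (vv (i+1))
           else (1 - 2*del m) * dist (vv 0) (vv m)) := by
    intro i _
    have hd16 : del m ≤ 1/16 := del_le hm0
    have hc : (0:ℝ) ≤ 1 - 2*del m := by linarith
    split_ifs <;> exact mul_nonneg hc dist_nonneg
  calc ENNReal.ofReal (2*((2^Kn : ℕ):ℝ) + (Kn:ℝ)/6 - 1/6)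
      ≤ ENNReal.ofReal (∑ i ∈ Finset.range (m+1),
          (if i < m then (1 - 2*del m) * dist (vv i) (vv (i+1))
           else (1 - 2*del m) * dist (vv 0) (vv m))) :=
        ENNReal.ofReal_le_ofReal (sum_pieces_lb Kn hK)
    _ = ∑ i ∈ Finset.range (m+1), ENNReal.ofReal
          (if i < m then (1 - 2*del m) * dist (vv i) (vv (i+1))
           else (1 - 2*del m) * dist (vv 0) (vv m)) :=
        ENNReal.ofReal_sum_of_nonneg hnonneg
    _ = ∑ i ∈ Finset.range (m+1), μH[1] (piece m i) :=
        (Finset.sum_congr rfl fun i hi => (hlen i hi).symm)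
    _ = μH[1] (⋃ i ∈ Finset.range (m+1), piece m i) := hmeas.symm
    _ ≤ μH[1] (frontier (KK m)) := measure_mono hsub
lemma ff_one : ff 1 = 1 := by
  simp [ff, tt, Finset.sum_range_one]

lemma ff_two : ff 2 = 1 + 1/Real.sqrt 2 := by
  rw [show (2:ℕ) = 1+1 from rfl, ff_succ, ff_one, tt]
  norm_num

lemma interior_KK_nonempty {m : ℕ} (hm : 4 ≤ m) : (interior (KK m)).Nonempty := by
  rw [KK, interior_convexHull_nonempty_iff_affineSpan_eq_top]
  have h0 : vv 0 ∈ vv '' Set.Iic m := ⟨0, by simp, rfl⟩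
  have h1 : vv 1 ∈ vv '' Set.Iic m := ⟨1, by simp; omega, rfl⟩
  have h2 : vv 2 ∈ vv '' Set.Iic m := ⟨2, by simp; omega, rfl⟩
  rw [AffineSubspace.affineSpan_eq_top_iff_vectorSpan_eq_top_of_nonempty ℝ _ _ ⟨vv 0, h0⟩]
  have hspan : Submodule.span ℝ {vv 1 - vv 0, vv 2 - vv 0} = ⊤ := by
    rw [Submodule.eq_top_iff']
    intro q
    set v := vv 1 - vv 0 with hv
    set w := vv 2 - vv 0 with hw
    have hff0 : ff 0 = 0 := ff_zero
    have hv0 : v 0 = 1 := by simp [hv, PiLp.sub_apply]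
    have hv1 : v 1 = 1 := by simp [hv, PiLp.sub_apply, ff_one, hff0]
    have hw0 : w 0 = 2 := by simp [hw, PiLp.sub_apply]
    have hw1 : w 1 = 1 + 1/Real.sqrt 2 := by simp [hw, PiLp.sub_apply, ff_two, hff0]
    set t : ℝ := 1/Real.sqrt 2 with ht
    have ht1 : t < 1 := by
      rw [ht, div_lt_one (Real.sqrt_pos.2 (by norm_num))]
      have : (1:ℝ) < Real.sqrt 2 := by
        have := Real.sqrt_lt_sqrt (by norm_num : (0:ℝ) ≤ 1) (by norm_num : (1:ℝ) < 2)
        simpa using this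
      linarith
    have hdet : t - 1 ≠ 0 := by intro hc; rw [sub_eq_zero] at hc; exact absurd hc (by linarith)
    set b : ℝ := (q 1 - q 0)/(t-1) with hb
    set a : ℝ := q 0 - 2*b with ha
    have : q = a • v + b • w := by
      refine PiLp.ext fun k => ?_
      fin_cases k <;>
        simp [PiLp.add_apply, PiLp.smul_apply, hv0, hv1, hw0, hw1, ha, hb] <;>
        field_simp <;> ring
    rw [this]
    exact Submodule.add_mem _ (Submodule.smul_mem _ _ (Submodule.subset_span (by simp)))
      (Submodule.smul_mem _ _ (Submodule.subset_span (by simp)))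
  apply top_unique
  rw [← hspan]
  apply Submodule.span_le.2
  rintro x (rfl | rfl)
  · exact vsub_mem_vectorSpan ℝ h1 h0
  · exact vsub_mem_vectorSpan ℝ h2 h0

lemma path_bound (n m : ℕ) (hn : 2 ≤ n) (p : Fin n → EuclideanSpace ℝ (Fin 2))
    (j : Fin n → ℕ) (hjm : ∀ i, j i ≤ m) (hjv : ∀ i, vv (j i) = p i) :
    ∃ σ : Equiv.Perm (Fin n),
      (∑ i : Fin n, if h : (i : ℕ) + 1 < n
          then dist (p (σ i)) (p (σ ⟨(i : ℕ) + 1, h⟩)) else 0)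
        ≤ (m:ℝ) + 2*((n:ℝ)-1) := by
  have hn0 : 0 < n := by omega
  refine ⟨Tuple.sort j, ?_⟩
  set σ : Equiv.Perm (Fin n) := Tuple.sort j with hσ
  have hmono : Monotone (j ∘ σ) := Tuple.monotone_sort j
  have hsum0 : (∑ i : Fin n, if h : (i : ℕ) + 1 < n
      then dist (p (σ i)) (p (σ ⟨(i : ℕ) + 1, h⟩)) else 0)
      = ∑ k ∈ Finset.range n, (fun k => if hk : k + 1 < n then
          dist (p (σ ⟨k, Nat.lt_of_succ_lt hk⟩)) (p (σ ⟨k+1, hk⟩)) else 0) k := by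
    rw [← Fin.sum_univ_eq_sum_range]
  rw [hsum0]
  have hsum1 : ∑ k ∈ Finset.range n, (fun k => if hk : k + 1 < n then
          dist (p (σ ⟨k, Nat.lt_of_succ_lt hk⟩)) (p (σ ⟨k+1, hk⟩)) else 0) k
      = ∑ k ∈ Finset.range (n-1), (fun k => if hk : k + 1 < n then
          dist (p (σ ⟨k, Nat.lt_of_succ_lt hk⟩)) (p (σ ⟨k+1, hk⟩)) else 0) k := by
    symm
    apply Finset.sum_subset (Finset.range_subset_range.2 (by omega))
    intro x hx hnx
    simp only [Finset.mem_range] at hx hnx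
    have hx1 : ¬ (x+1 < n) := by omega
    simp only [dif_neg hx1]
  rw [hsum1]
  set G : ℕ → ℝ := fun k => if hk : k < n then (j (σ ⟨k, hk⟩) : ℝ) else 0 with hG
  have hterm : ∀ k ∈ Finset.range (n-1), (fun k => if hk : k + 1 < n then
          dist (p (σ ⟨k, Nat.lt_of_succ_lt hk⟩)) (p (σ ⟨k+1, hk⟩)) else 0) k
      ≤ G (k+1) - G k + 2 := by
    intro k hk
    simp only [Finset.mem_range] at hk
    have hk' : k + 1 < n := by omega
    have hkn : k < n := by omega
    simp only [dif_pos hk']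
    have hGk : G k = (j (σ ⟨k, hkn⟩) : ℝ) := by
      rw [hG]; simp only [dif_pos hkn]
    have hGk1 : G (k+1) = (j (σ ⟨k+1, hk'⟩) : ℝ) := by
      rw [hG]; simp only [dif_pos hk']
    have hle : j (σ ⟨k, hkn⟩) ≤ j (σ ⟨k+1, hk'⟩) := by
      have : (⟨k, hkn⟩ : Fin n) ≤ ⟨k+1, hk'⟩ := by
        rw [Fin.mk_le_mk]; omega
      exact hmono this
    have hdist : dist (p (σ ⟨k, hkn⟩)) (p (σ ⟨k+1, hk'⟩))
        ≤ ((j (σ ⟨k+1, hk'⟩) : ℝ) - (j (σ ⟨k, hkn⟩) : ℝ)) + 2 := by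
      rw [← hjv (σ ⟨k, hkn⟩), ← hjv (σ ⟨k+1, hk'⟩)]
      exact dist_vv_le hle
    rw [hGk, hGk1]
    calc dist (p (σ ⟨k, Nat.lt_of_succ_lt hk'⟩)) (p (σ ⟨k+1, hk'⟩))
        = dist (p (σ ⟨k, hkn⟩)) (p (σ ⟨k+1, hk'⟩)) := rfl
      _ ≤ _ := hdist
      _ = _ := by ring
  have htel : ∑ k ∈ Finset.range (n-1), (G (k+1) - G k + 2)
      = (G (n-1) - G 0) + 2*((n:ℝ)-1) := by
    rw [Finset.sum_add_distrib, Finset.sum_range_sub G, Finset.sum_const, Finset.card_range,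
      nsmul_eq_mul]
    have hc : ((n-1:ℕ):ℝ) = (n:ℝ) - 1 := by
      have h1 : 1 ≤ n := by omega
      push_cast [Nat.cast_sub h1]
      ring
    rw [hc]; ring
  have hG0 : 0 ≤ G 0 := by
    rw [hG]; simp only [dif_pos hn0]
    exact Nat.cast_nonneg _
  have hGn : G (n-1) ≤ (m:ℝ) := by
    rw [hG]; simp only [dif_pos (show n-1 < n by omega)]
    exact_mod_cast hjm _
  calc ∑ k ∈ Finset.range (n-1), (fun k => if hk : k + 1 < n then
          dist (p (σ ⟨k, Nat.lt_of_succ_lt hk⟩)) (p (σ ⟨k+1, hk⟩)) else 0) k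
      ≤ ∑ k ∈ Finset.range (n-1), (G (k+1) - G k + 2) := Finset.sum_le_sum hterm
    _ = (G (n-1) - G 0) + 2*((n:ℝ)-1) := htel
    _ ≤ (m:ℝ) + 2*((n:ℝ)-1) := by linarith

end Stmt8Aux

open Stmt8Aux in
theorem stmt8 (n : ℕ) (hn : 2 ≤ n) :
    ∃ K : Set (EuclideanSpace ℝ (Fin 2)),
      IsCompact K ∧ Convex ℝ K ∧ (interior K).Nonempty ∧
      ∀ p : Fin n → EuclideanSpace ℝ (Fin 2),
        (∀ i, p i ∈ Set.extremePoints ℝ K) →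
        ∃ σ : Equiv.Perm (Fin n),
          ENNReal.ofReal
            (∑ i : Fin n, if h : (i : ℕ) + 1 < n
              then dist (p (σ i)) (p (σ ⟨(i : ℕ) + 1, h⟩)) else 0) <
            μH[1] (frontier K) / 2 := by
  have hK2 : 2 ≤ 24*n := by omega
  set Kn := 24*n with hKn
  set m := 2^Kn with hmdef
  have hm4 : 4 ≤ m := by
    rw [hmdef]
    calc 4 = 2^2 := by norm_num
    _ ≤ 2^Kn := Nat.pow_le_pow_right (by norm_num) hK2
  refine ⟨KK m, isCompact_KK m, convex_KK m, interior_KK_nonempty hm4, ?_⟩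
  intro p hp
  have hpV : ∀ i, ∃ x, x ≤ m ∧ vv x = p i := by
    intro i
    have hmem : p i ∈ vv '' Set.Iic m := extremePoints_convexHull_subset (hp i)
    rcases hmem with ⟨x, hx, hvx⟩
    exact ⟨x, hx, hvx⟩
  choose j hjm hjv using hpV
  obtain ⟨σ, hσ⟩ := path_bound n m hn p j hjm hjv
  refine ⟨σ, ?_⟩
  have hper := frontier_lb Kn hK2
  rw [← hmdef] at hper
  set Per : ℝ := 2*(m:ℝ) + (Kn:ℝ)/6 - 1/6 with hPer
  have hmR : (4:ℝ) ≤ (m:ℝ) := by exact_mod_cast hm4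
  have hhalf : (m:ℝ) + 2*((n:ℝ)-1) < Per/2 := by
    have hKnn : (Kn:ℝ) = 24*(n:ℝ) := by rw [hKn]; push_cast; ring
    rw [hPer, hKnn]
    have hn1 : (1:ℝ) ≤ (n:ℝ) := by exact_mod_cast (by omega : 1 ≤ n)
    nlinarith
  have h1 : ENNReal.ofReal (∑ i : Fin n, if h : (i : ℕ) + 1 < n
      then dist (p (σ i)) (p (σ ⟨(i : ℕ) + 1, h⟩)) else 0)
      ≤ ENNReal.ofReal ((m:ℝ) + 2*((n:ℝ)-1)) := ENNReal.ofReal_le_ofReal hσ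
  have h2 : ENNReal.ofReal ((m:ℝ) + 2*((n:ℝ)-1)) < ENNReal.ofReal (Per/2) := by
    rw [ENNReal.ofReal_lt_ofReal_iff (by nlinarith)]
    exact hhalf
  have h3 : ENNReal.ofReal (Per/2) = ENNReal.ofReal Per / 2 := by
    rw [ENNReal.ofReal_div_of_pos (by norm_num)]
    norm_num
  have h4 : ENNReal.ofReal Per / 2 ≤ μH[1] (frontier (KK m)) / 2 :=
    ENNReal.div_le_div_right hper 2
  exact lt_of_le_of_lt h1 (lt_of_lt_of_le (h3 ▸ h2) h4)
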